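/- (Formula for the antilinear functional determined by its imaginary part on a period lattice) Let Ω be a complex symmetric g×g matrix whose imaginary part Im Ω is positive definite, with rows ω_1,…,ω_g, and let e_1,…,e_g be the standard basis of ℂ^g (viewed as row vectors). Then ω_1,…,ω_g, e_1,…,e_g form an ℝ-basis of ℂ^g, and if η : ℂ^g → ℝ is the unique ℝ-linear map with η(ω_k) = (μ_1)_k and η(e_j) = (μ_2)_j for given μ_1, μ_2 ∈ ℝ^g, then the ℂ-antilinear functional φ(v) = η(−iv) + i·η(v) is given by φ(v) = −v̄·(Im Ω)^{−1}·(μ_1 − Ω μ_2), where v̄ is the complex conjugate of v regarded as a row vector and μ_1 − Ω μ_2 is a column vector. -/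

import Mathlib

/-- Formula for the antilinear functional determined by its imaginary part on a
period lattice: if `Ω` is a complex symmetric `g×g` matrix with positive definite
imaginary part, then its rows `ω₁,…,ω_g` together with the standard basis vectors
`e₁,…,e_g` form an `ℝ`-basis of `ℂ^g`, and any `ℝ`-linear map `η : ℂ^g → ℝ` with
`η(ω_k) = (μ₁)_k` and `η(e_j) = (μ₂)_j` gives rise to the `ℂ`-antilinear functional
`φ(v) = η(−iv) + i·η(v) = −v̄·(Im Ω)⁻¹·(μ₁ − Ω μ₂)`. -/
theorem antilinear_functional_period_formula
    {g : ℕ} (Ω : Matrix (Fin g) (Fin g) ℂ)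
    (hsymm : Ω.IsSymm) (hpos : (Ω.map Complex.im).PosDef)
    (μ₁ μ₂ : Fin g → ℝ) :
    (LinearIndependent ℝ
        (Sum.elim (fun k : Fin g => Ω k)
          (fun j : Fin g => (Pi.single j 1 : Fin g → ℂ))) ∧
      Submodule.span ℝ
        (Set.range (Sum.elim (fun k : Fin g => Ω k)
          (fun j : Fin g => (Pi.single j 1 : Fin g → ℂ)))) = ⊤) ∧
    ∀ η : (Fin g → ℂ) →ₗ[ℝ] ℝ,
      (∀ k : Fin g, η (Ω k) = μ₁ k) →
      (∀ j : Fin g, η (Pi.single j 1) = μ₂ j) →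
      ∀ v : Fin g → ℂ,
        ((η ((-Complex.I) • v) : ℂ) + Complex.I * (η v : ℂ)) =
        -(dotProduct (star v)
            (((Ω.map Complex.im)⁻¹.map (fun x : ℝ => (x : ℂ))).mulVec
              (fun k : Fin g =>
                (μ₁ k : ℂ) - Ω.mulVec (fun l : Fin g => (μ₂ l : ℂ)) k))) := by
  classical
  set Y := Ω.map Complex.im with hYdef
  set X := Ω.map Complex.re with hXdef
  have hdet : IsUnit Y.det := isUnit_iff_ne_zero.mpr hpos.det_pos.ne'
  have hYY : Y * Y⁻¹ = 1 := Matrix.mul_nonsing_inv Y hdet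
  have hYY' : Y⁻¹ * Y = 1 := Matrix.nonsing_inv_mul Y hdet
  have hli : LinearIndependent ℝ
      (Sum.elim (fun k : Fin g => Ω k)
        (fun j : Fin g => (Pi.single j 1 : Fin g → ℂ))) := by
    rw [Fintype.linearIndependent_iff]
    intro c hc
    have key : ∀ j, (∑ k, c (Sum.inl k) • Ω k j) + (c (Sum.inr j) : ℂ) = 0 := by
      intro j
      have h0 := congrFun hc j
      simpa [Fintype.sum_sum_type, Finset.sum_apply, Pi.single_apply] using h0
    have ha : ∀ k, c (Sum.inl k) = 0 := by
      have hv : Matrix.vecMul (fun k => c (Sum.inl k)) Y = 0 := by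
        funext j
        have h1 := congrArg Complex.im (key j)
        simpa [Matrix.vecMul, dotProduct, Complex.im_sum, Complex.smul_im,
          hYdef, Matrix.map_apply] using h1
      have h2 := congrArg (fun u => Matrix.vecMul u Y⁻¹) hv
      simp only [Matrix.vecMul_vecMul, hYY, Matrix.vecMul_one, Matrix.zero_vecMul] at h2
      intro k; exact congrFun h2 k
    have hb : ∀ j, c (Sum.inr j) = 0 := by
      intro j
      have h3 := key j
      simp only [ha, zero_smul, Finset.sum_const_zero, zero_add] at h3
      exact_mod_cast h3
    intro s
    cases s with
    | inl k => exact ha k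
    | inr j => exact hb j
  have hcard : Fintype.card (Fin g ⊕ Fin g) = Module.finrank ℝ (Fin g → ℂ) := by
    simp [Module.finrank_pi_fintype, Complex.finrank_real_complex, two_mul, mul_comm]
    omega
  have hspan := hli.span_eq_top_of_card_eq_finrank' hcard
  refine ⟨⟨hli, hspan⟩, ?_⟩
  intro η h₁ h₂ v
  set cv : Fin g → ℂ := fun k => (μ₁ k : ℂ) - Ω.mulVec (fun l => (μ₂ l : ℂ)) k with hcv
  set w : Fin g → ℂ := (Y⁻¹.map (fun x : ℝ => (x : ℂ))).mulVec cv with hw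
  have hcvim : ∀ l, (cv l).im = -(Y.mulVec μ₂ l) := by
    intro l
    simp [hcv, Matrix.mulVec, dotProduct, Complex.im_sum, hYdef, Matrix.map_apply]
  have hcvre : ∀ l, (cv l).re = μ₁ l - X.mulVec μ₂ l := by
    intro l
    simp [hcv, Matrix.mulVec, dotProduct, Complex.re_sum, hXdef, Matrix.map_apply]
  have hwim : ∀ j, (w j).im = -μ₂ j := by
    intro j
    have e1 : (w j).im = Y⁻¹.mulVec (fun l => (cv l).im) j := by
      simp [hw, Matrix.mulVec, dotProduct, Complex.im_sum, Matrix.map_apply]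
    rw [e1]
    have e2 : (fun l => (cv l).im) = -(Y.mulVec μ₂) := by
      funext l; simp [hcvim]
    rw [e2, Matrix.mulVec_neg, Matrix.mulVec_mulVec, hYY', Matrix.one_mulVec]
    rfl
  have hwre : ∀ j, (w j).re = Y⁻¹.mulVec (fun l => μ₁ l - X.mulVec μ₂ l) j := by
    intro j
    have e1 : (w j).re = Y⁻¹.mulVec (fun l => (cv l).re) j := by
      simp [hw, Matrix.mulVec, dotProduct, Complex.re_sum, Matrix.map_apply]
    rw [e1]
    congr 1
    funext l; exact hcvre l
  have star_smul_real : ∀ (r : ℝ) (x : Fin g → ℂ), star (r • x) = r • star x := by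
    intro r x; funext i
    simp [Pi.star_apply, Complex.star_def, Complex.ext_iff, Complex.smul_re, Complex.smul_im]
  let F : (Fin g → ℂ) →ₗ[ℝ] ℝ :=
    { toFun := fun u => -(dotProduct (star u) w).im
      map_add' := by
        intro x y
        simp only [star_add, add_dotProduct, Complex.add_im]
        ring
      map_smul' := by
        intro r x
        show -(dotProduct (star (r • x)) w).im
            = (RingHom.id ℝ) r • -(dotProduct (star x) w).im
        rw [star_smul_real]
        simp only [dotProduct, Finset.sum_apply, Pi.smul_apply, smul_mul_assoc,
          ← Finset.smul_sum, Complex.smul_im, smul_eq_mul, RingHom.id_apply]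
        ring }
  have hFη : ∀ u, η u = -(dotProduct (star u) w).im := by
    have heq : η = F := by
      apply LinearMap.ext_on hspan
      rintro x ⟨s, rfl⟩
      cases s with
      | inl k =>
        rw [Sum.elim_inl, h₁]
        show μ₁ k = -(dotProduct (star (Ω k)) w).im
        have step1 : ∀ j, -((star (Ω k j)) * w j).im = X k j * μ₂ j + Y k j * (w j).re := by
          intro j
          simp only [Complex.star_def, Complex.mul_im, Complex.conj_re, Complex.conj_im,
            hwim, hXdef, hYdef, Matrix.map_apply]
          ring
        have : -(dotProduct (star (Ω k)) w).im
            = (∑ j, X k j * μ₂ j) + ∑ j, Y k j * (w j).re := by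
          rw [dotProduct, Complex.im_sum, ← Finset.sum_neg_distrib]
          rw [← Finset.sum_add_distrib]
          exact Finset.sum_congr rfl fun j _ => step1 j
        rw [this]
        have e3 : (fun j => (w j).re) = Y⁻¹.mulVec (fun l => μ₁ l - X.mulVec μ₂ l) := by
          funext j; exact hwre j
        have e4 : (∑ j, Y k j * (w j).re) = Y.mulVec (fun j => (w j).re) k := rfl
        rw [e4, e3, Matrix.mulVec_mulVec, hYY, Matrix.one_mulVec]
        have e5 : (∑ j, X k j * μ₂ j) = X.mulVec μ₂ k := rfl
        rw [e5]; ring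
      | inr j =>
        rw [Sum.elim_inr, h₂]
        show μ₂ j = -(dotProduct (star (Pi.single j 1)) w).im
        have : dotProduct (star (Pi.single j (1 : ℂ))) w = w j := by
          simp [dotProduct, Pi.single_apply, apply_ite (star : ℂ → ℂ)]
        rw [this, hwim]; ring
    intro u; rw [heq]; rfl
  rw [hFη v, hFη ((-Complex.I) • v)]
  have hstar : star ((-Complex.I) • v) = Complex.I • star v := by
    rw [star_smul]; simp
  rw [hstar, smul_dotProduct, smul_eq_mul]
  set z := dotProduct (star v) w with hz
  have : ∀ z : ℂ, ((-(Complex.I * z).im : ℝ) : ℂ) + Complex.I * ((-z.im : ℝ) : ℂ) = -z := by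
    intro z; apply Complex.ext <;> simp
  exact this z
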